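/- arXiv:2503.10124 — 2 statements merged into one kernel-verified Lean document; each statement's English description precedes it below -/
import Mathlib

section
/- For k ≥ 1 and m, n, r ≥ 0, the operator identity ⟨XD+r+m⟩_n · X^k = X^k · Σ_{l=0}^{n} C(n,l)·⟨XD+r⟩_l·⟨m+k⟩_{n-l} holds, where X is multiplication by x and D = d/dx. -/
/-- Rising factorial ⟨x⟩ₙ = x(x+1)⋯(x+n-1). -/
noncomputable def risingFac (x : ℝ) (n : ℕ) : ℝ := ∏ i ∈ Finset.range n, (x + i)

/-- Falling factorial (x)ₙ = x(x-1)⋯(x-n+1). -/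
noncomputable def fallingFac (x : ℝ) (n : ℕ) : ℝ := ∏ i ∈ Finset.range n, (x - i)

/-- Lah numbers L(n,k) = (n!/k!)·C(n-1,k-1) for n ≥ k ≥ 1, L(0,0)=1, and 0 for n < k. -/
noncomputable def lah (n k : ℕ) : ℝ :=
  if k ≤ n then (n.factorial : ℝ) / (k.factorial : ℝ) * ((n - 1).choose (k - 1)) else 0

/-- Lah-Bell polynomial LBₙ(x) = Σ_{k=0}^n L(n,k) xᵏ. -/
noncomputable def lahBell (n : ℕ) (x : ℝ) : ℝ := ∑ k ∈ Finset.range (n + 1), lah n k * x ^ k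

/-- r-Lah numbers Lʳ(n,k) = (n!/k!)·C(n+r-1, k+r-1) for n ≥ k, and 0 for n < k. -/
noncomputable def rLah (r n k : ℕ) : ℝ :=
  if k ≤ n then (n.factorial : ℝ) / (k.factorial : ℝ) * ((n + r - 1).choose (k + r - 1)) else 0

/-- r-Lah-Bell polynomial LBₙ⁽ʳ⁾(x) = Σ_{k=0}^n Lʳ(n,k) xᵏ. -/
noncomputable def rLahBell (r n : ℕ) (x : ℝ) : ℝ :=
  ∑ k ∈ Finset.range (n + 1), rLah r n k * x ^ k

open Polynomial in
/-- X: multiplication by the variable, as a linear endomorphism of ℝ[X]. -/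
noncomputable def Xop : Module.End ℝ (Polynomial ℝ) := LinearMap.mulLeft ℝ (Polynomial.X)

/-- D: differentiation, as a linear endomorphism of ℝ[X]. -/
noncomputable def Dop : Module.End ℝ (Polynomial ℝ) := Polynomial.derivative

/-- Operator rising factorial ⟨A⟩ₙ = A(A+1)⋯(A+n-1). -/
noncomputable def endRF (A : Module.End ℝ (Polynomial ℝ)) : ℕ → Module.End ℝ (Polynomial ℝ)
  | 0 => 1
  | n + 1 => endRF A n * (A + (n : ℕ) • 1)

lemma risingFac_zero (x : ℝ) : risingFac x 0 = 1 := by simp [risingFac]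

lemma risingFac_succ (x : ℝ) (n : ℕ) : risingFac x (n+1) = risingFac x n * (x + n) := by
  simp [risingFac, Finset.prod_range_succ]

/-- Vandermonde convolution for rising factorials. -/
lemma risingFac_add (x y : ℝ) (n : ℕ) :
    risingFac (x + y) n =
      ∑ l ∈ Finset.range (n + 1), (n.choose l : ℝ) * risingFac y (n - l) * risingFac x l := by
  induction n with
  | zero => simp [risingFac_zero]
  | succ n ih =>
    rw [risingFac_succ, ih, Finset.sum_mul]
    have key : ∀ l ∈ Finset.range (n+1),
        (n.choose l : ℝ) * risingFac y (n - l) * risingFac x l * (x + y + n)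
        = ((n.choose l : ℝ) * risingFac y (n - l) * risingFac x (l+1))
          + ((n.choose l : ℝ) * risingFac y (n + 1 - l) * risingFac x l) := by
      intro l hl
      rw [Finset.mem_range] at hl
      have h1 : n + 1 - l = (n - l) + 1 := by omega
      rw [h1, risingFac_succ, risingFac_succ]
      have h2 : ((n - l : ℕ) : ℝ) = (n : ℝ) - l := by
        have := Nat.cast_sub (by omega : l ≤ n) (R := ℝ); push_cast at this ⊢; linarith
      rw [h2]; ring
    rw [Finset.sum_congr rfl key, Finset.sum_add_distrib]
    rw [Finset.sum_range_succ' (f := fun l =>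
      ((n+1).choose l : ℝ) * risingFac y (n+1-l) * risingFac x l)]
    have hS : ∑ i ∈ Finset.range (n+1),
        ((n+1).choose (i+1) : ℝ) * risingFac y (n+1-(i+1)) * risingFac x (i+1)
        = (∑ i ∈ Finset.range (n+1), (n.choose i : ℝ) * risingFac y (n - i) * risingFac x (i+1))
          + ∑ i ∈ Finset.range (n+1), (n.choose (i+1) : ℝ) * risingFac y (n - i) * risingFac x (i+1) := by
      rw [← Finset.sum_add_distrib]
      refine Finset.sum_congr rfl fun i hi => ?_
      have h3 : n + 1 - (i+1) = n - i := by omega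
      rw [h3, Nat.choose_succ_succ, Nat.cast_add]
      ring
    rw [hS, add_assoc]
    congr 1
    rw [Finset.sum_range_succ' (f := fun l =>
      (n.choose l : ℝ) * risingFac y (n+1-l) * risingFac x l)]
    rw [Finset.sum_range_succ (f := fun i =>
      (n.choose (i+1) : ℝ) * risingFac y (n - i) * risingFac x (i+1))]
    simp only [Nat.choose_succ_self, Nat.cast_zero, zero_mul, add_zero, Nat.sub_zero,
      Nat.choose_zero_right, Nat.cast_one]
    congr 1
    refine Finset.sum_congr rfl fun i hi => ?_
    have h3 : n + 1 - (i+1) = n - i := by omega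
    rw [h3]

lemma Xop_pow_apply (k : ℕ) (p : Polynomial ℝ) :
    (Xop ^ k) p = Polynomial.X ^ k * p := by
  rw [Xop, LinearMap.pow_mulLeft, LinearMap.mulLeft_apply]

lemma XD_Xpow (j : ℕ) :
    (Xop * Dop) (Polynomial.X ^ j : Polynomial ℝ) = (j : ℝ) • Polynomial.X ^ j := by
  cases j with
  | zero => simp [Xop, Dop]
  | succ j =>
    simp only [Module.End.mul_apply, Dop, Polynomial.derivative_X_pow, Xop,
      LinearMap.mulLeft_apply, Nat.add_sub_cancel, Polynomial.smul_eq_C_mul]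
    push_cast
    rw [pow_succ]
    ring

lemma endRF_XD_apply (c n j : ℕ) :
    endRF (Xop * Dop + c • 1) n (Polynomial.X ^ j : Polynomial ℝ)
      = risingFac ((c : ℝ) + j) n • Polynomial.X ^ j := by
  induction n with
  | zero => simp [endRF, risingFac_zero]
  | succ n ih =>
    show (endRF (Xop * Dop + c • 1) n * (Xop * Dop + c • 1 + n • 1)) _ = _
    rw [Module.End.mul_apply]
    have h1 : (Xop * Dop + c • 1 + n • (1 : Module.End ℝ (Polynomial ℝ)))
        (Polynomial.X ^ j) = (((c : ℝ) + j) + n) • Polynomial.X ^ j := by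
      simp only [LinearMap.add_apply, XD_Xpow, LinearMap.smul_apply, Module.End.one_apply]
      rw [← Nat.cast_smul_eq_nsmul ℝ c, ← Nat.cast_smul_eq_nsmul ℝ n, ← add_smul, ← add_smul]
      ring_nf
    rw [h1, map_smul, ih, smul_smul, risingFac_succ, mul_comm]

/-- For k ≥ 1: ⟨XD+r+m⟩ₙ Xᵏ = Xᵏ Σ_{l=0}^n C(n,l) ⟨XD+r⟩ₗ ⟨m+k⟩_{n-l}. -/
theorem opRF_mul_Xpow (n m r k : ℕ) (hk : 1 ≤ k) :
    endRF (Xop * Dop + (r + m) • 1) n * Xop ^ k =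
      Xop ^ k * ∑ l ∈ Finset.range (n + 1),
        ((n.choose l : ℝ) * risingFac ((m : ℝ) + k) (n - l)) •
          endRF (Xop * Dop + r • 1) l := by
  apply Polynomial.lhom_ext'
  intro j
  apply LinearMap.ext_ring
  simp only [LinearMap.comp_apply, ← Polynomial.X_pow_eq_monomial]
  rw [Module.End.mul_apply, Module.End.mul_apply, Xop_pow_apply, ← pow_add,
    endRF_XD_apply]
  rw [LinearMap.sum_apply]
  have hterm : ∀ l ∈ Finset.range (n+1),
      (((n.choose l : ℝ) * risingFac ((m : ℝ) + k) (n - l)) •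
        endRF (Xop * Dop + r • 1) l) (Polynomial.X ^ j)
      = ((n.choose l : ℝ) * risingFac ((m : ℝ) + k) (n - l) * risingFac ((r : ℝ) + j) l)
          • Polynomial.X ^ j := by
    intro l _
    rw [LinearMap.smul_apply, endRF_XD_apply, smul_smul]
  rw [Finset.sum_congr rfl hterm, ← Finset.sum_smul, map_smul, Xop_pow_apply, ← pow_add]
  have hs : ((↑(r + m) : ℝ) + (↑(k + j) : ℝ)) = ((r : ℝ) + j) + ((m : ℝ) + k) := by
    push_cast; ring
  rw [hs, risingFac_add]
end

section
/- For nonzero real λ and nonnegative integers n, k, r with n ≥ k, the λ-analogue of the r-Lah number, defined by ⟨x+r⟩_{n,λ} = Σ_{k=0}^{n} L_λ^r(n,k)·(x)_{k,λ}, satisfies L_λ^r(n,k) = (n!/k!)·C_λ(r+λ(n-1), n-k), where C_λ(x, j) = (x)_{j,λ}/j! is the degenerate binomial coefficient. -/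
/-- Degenerate rising factorial ⟨x⟩_{n,λ} = x(x+λ)⋯(x+(n-1)λ). -/
noncomputable def degRising (l x : ℝ) (n : ℕ) : ℝ := ∏ i ∈ Finset.range n, (x + i * l)

/-- Degenerate falling factorial (x)_{n,λ} = x(x-λ)⋯(x-(n-1)λ). -/
noncomputable def degFalling (l x : ℝ) (n : ℕ) : ℝ := ∏ i ∈ Finset.range n, (x - i * l)

/-- Degenerate binomial coefficient C_λ(x,k) = (x)_{k,λ}/k!. -/
noncomputable def degChoose (l x : ℝ) (k : ℕ) : ℝ := degFalling l x k / (k.factorial : ℝ)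


noncomputable def Bc (l : ℝ) (r n j : ℕ) : ℝ :=
  (n.choose j : ℝ) * ∏ i ∈ Finset.Ico j n, ((r : ℝ) + (i : ℝ) * l)

lemma degFalling_succ' (l x : ℝ) (n : ℕ) :
    degFalling l x (n+1) = degFalling l x n * (x - n * l) := by
  simp [degFalling, Finset.prod_range_succ]

lemma degRising_succ' (l x : ℝ) (n : ℕ) :
    degRising l x (n+1) = degRising l x n * (x + n * l) := by
  simp [degRising, Finset.prod_range_succ]

lemma Bc_rec0 (l : ℝ) (r n : ℕ) :
    Bc l r (n+1) 0 = ((r:ℝ) + (n:ℝ) * l) * Bc l r n 0 := by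
  simp only [Bc, Nat.choose_zero_right, Nat.cast_one, one_mul]
  rw [Finset.prod_Ico_succ_top (Nat.zero_le n)]
  ring

lemma Bc_rec (l : ℝ) (r n k : ℕ) :
    Bc l r (n+1) (k+1) = Bc l r n k + ((r:ℝ) + ((n:ℝ)+(k:ℝ)+1)*l) * Bc l r n (k+1) := by
  rcases lt_trichotomy k n with h | h | h
  · have h1 : ((n+1).choose (k+1) : ℝ) = (n.choose k : ℝ) + (n.choose (k+1) : ℝ) := by
      rw [Nat.choose_succ_succ]; push_cast; ring
    have h2 : (n.choose (k+1) : ℝ) * ((k:ℝ)+1) = (n.choose k : ℝ) * ((n:ℝ)-(k:ℝ)) := by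
      have heq := Nat.choose_succ_right_eq n k
      have hc : ((n - k : ℕ) : ℝ) = (n:ℝ) - (k:ℝ) := by
        rw [Nat.cast_sub h.le]
      calc (n.choose (k+1) : ℝ) * ((k:ℝ)+1)
          = ((n.choose (k+1) * (k+1) : ℕ) : ℝ) := by push_cast; ring
        _ = ((n.choose k * (n - k) : ℕ) : ℝ) := by rw [heq]
        _ = (n.choose k : ℝ) * ((n:ℝ)-(k:ℝ)) := by push_cast [hc]; ring
    unfold Bc
    rw [Finset.prod_Ico_succ_top (by omega : k+1 ≤ n),
        Finset.prod_eq_prod_Ico_succ_bot h]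
    set P : ℝ := ∏ i ∈ Finset.Ico (k+1) n, ((r : ℝ) + (i : ℝ) * l) with hP
    linear_combination (((r:ℝ) + (n:ℝ)*l) * P) * h1 - (l * P) * h2
  · subst h
    simp [Bc, Nat.choose_succ_self]
  · have e1 : (n+1).choose (k+1) = 0 := Nat.choose_eq_zero_of_lt (by omega)
    have e2 : n.choose k = 0 := Nat.choose_eq_zero_of_lt h
    have e3 : n.choose (k+1) = 0 := Nat.choose_eq_zero_of_lt (by omega)
    simp [Bc, e1, e2, e3]

lemma expand_aux (l : ℝ) (r : ℕ) (n : ℕ) (x : ℝ) :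
    degRising l (x + r) n = ∑ j ∈ Finset.range (n+1), Bc l r n j * degFalling l x j := by
  induction n with
  | zero => simp [degRising, degFalling, Bc]
  | succ n ih =>
    rw [degRising_succ', ih, Finset.sum_mul]
    have hterm : ∀ j ∈ Finset.range (n+1),
        Bc l r n j * degFalling l x j * (x + (r:ℝ) + (n:ℝ)*l)
        = Bc l r n j * degFalling l x (j+1)
          + (((r:ℝ) + ((n:ℝ)+(j:ℝ))*l) * Bc l r n j) * degFalling l x j := by
      intro j _
      rw [degFalling_succ']; ring
    rw [Finset.sum_congr rfl hterm, Finset.sum_add_distrib]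
    rw [Finset.sum_range_succ' (fun k => Bc l r (n+1) k * degFalling l x k) (n+1)]
    have hrec : ∀ k ∈ Finset.range (n+1),
        Bc l r (n+1) (k+1) * degFalling l x (k+1)
        = Bc l r n k * degFalling l x (k+1)
          + (((r:ℝ) + ((n:ℝ)+((k:ℝ)+1))*l) * Bc l r n (k+1)) * degFalling l x (k+1) := by
      intro k _
      rw [Bc_rec]; ring
    rw [Finset.sum_congr rfl hrec, Finset.sum_add_distrib]
    rw [Finset.sum_range_succ'
      (fun j => (((r:ℝ) + ((n:ℝ)+(j:ℝ))*l) * Bc l r n j) * degFalling l x j) n]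
    have htop : (((r:ℝ) + ((n:ℝ)+(((n:ℕ):ℝ)+1))*l) * Bc l r n (n+1)) * degFalling l x (n+1) = 0 := by
      simp [Bc, Nat.choose_succ_self]
    have hext : ∑ j ∈ Finset.range n,
        (((r:ℝ) + ((n:ℝ)+(((j:ℕ):ℝ)+1))*l) * Bc l r n (j+1)) * degFalling l x (j+1)
        = ∑ j ∈ Finset.range (n+1),
        (((r:ℝ) + ((n:ℝ)+(((j:ℕ):ℝ)+1))*l) * Bc l r n (j+1)) * degFalling l x (j+1) := by
      rw [Finset.sum_range_succ, htop, add_zero]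
    have h0 : Bc l r (n+1) 0 * degFalling l x 0
        = (((r:ℝ) + ((n:ℝ)+((0:ℕ):ℝ))*l) * Bc l r n 0) * degFalling l x 0 := by
      rw [Bc_rec0]; push_cast; ring
    push_cast
    push_cast at hext
    rw [hext, h0]
    push_cast
    ring

lemma degFalling_ne_zero' (l : ℝ) (hl : l ≠ 0) (j m : ℕ) (h : j ≤ m) :
    degFalling l ((m:ℝ)*l) j ≠ 0 := by
  unfold degFalling
  rw [Finset.prod_ne_zero_iff]
  intro i hi
  have hi' : i < m := lt_of_lt_of_le (Finset.mem_range.mp hi) h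
  have hne : ((m:ℝ) - i) ≠ 0 := sub_ne_zero.mpr (by exact_mod_cast hi'.ne')
  have e : (m:ℝ)*l - i*l = ((m:ℝ)-i)*l := by ring
  rw [e]
  exact mul_ne_zero hne hl

lemma degFalling_eq_zero' (l : ℝ) (j m : ℕ) (h : m < j) :
    degFalling l ((m:ℝ)*l) j = 0 := by
  unfold degFalling
  exact Finset.prod_eq_zero (Finset.mem_range.mpr h) (by ring)

lemma unique_coeff (l : ℝ) (hl : l ≠ 0) (n : ℕ) (c : ℕ → ℝ)
    (h : ∀ x, ∑ j ∈ Finset.range (n+1), c j * degFalling l x j = 0) :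
    ∀ k, k ≤ n → c k = 0 := by
  intro k
  induction k using Nat.strong_induction_on with
  | _ k ih =>
    intro hk
    have h0 := h ((k:ℝ)*l)
    rw [Finset.sum_eq_single k] at h0
    · exact (mul_eq_zero.mp h0).resolve_right (degFalling_ne_zero' l hl k k le_rfl)
    · intro j hj hne
      rcases lt_or_gt_of_ne hne with hlt | hgt
      · rw [ih j hlt (le_trans hlt.le hk), zero_mul]
      · rw [degFalling_eq_zero' l j k hgt, mul_zero]
    · intro hk'
      exact absurd (Finset.mem_range.mpr (by omega)) hk'

lemma Bc_eq (l : ℝ) (r n k : ℕ) (hkn : k ≤ n) :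
    Bc l r n k = (n.factorial : ℝ) / (k.factorial : ℝ) *
      degChoose l ((r : ℝ) + l * ((n : ℝ) - 1)) (n - k) := by
  have hprod : degFalling l ((r:ℝ) + l*((n:ℝ)-1)) (n-k)
      = ∏ i ∈ Finset.Ico k n, ((r:ℝ) + (i:ℝ) * l) := by
    rw [Finset.prod_Ico_eq_prod_range]
    unfold degFalling
    rw [← Finset.prod_range_reflect (fun j => (r:ℝ) + l*((n:ℝ)-1) - (j:ℝ)*l) (n-k)]
    apply Finset.prod_congr rfl
    intro j hj
    have hj' : j < n - k := Finset.mem_range.mp hj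
    have h1 : ((n - k - 1 - j : ℕ) : ℝ) = (n:ℝ) - k - 1 - j := by
      have : n - k - 1 - j = n - (k + 1 + j) := by omega
      rw [this, Nat.cast_sub (by omega)]
      push_cast; ring
    have h2 : ((k + j : ℕ) : ℝ) = (k:ℝ) + j := by push_cast; ring
    rw [h1, h2]
    ring
  have hfac : ((n.choose k : ℕ):ℝ) * (k.factorial : ℝ) * ((n-k).factorial : ℝ)
      = (n.factorial : ℝ) := by
    exact_mod_cast Nat.choose_mul_factorial_mul_factorial hkn
  unfold Bc degChoose
  rw [hprod]
  set P : ℝ := ∏ i ∈ Finset.Ico k n, ((r : ℝ) + (i : ℝ) * l) with hP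
  have hk0 : (k.factorial : ℝ) ≠ 0 := Nat.cast_ne_zero.mpr (Nat.factorial_ne_zero k)
  have hnk0 : ((n-k).factorial : ℝ) ≠ 0 := Nat.cast_ne_zero.mpr (Nat.factorial_ne_zero (n-k))
  field_simp
  linear_combination P * hfac

/-- If L_λʳ(n,·) are the connection coefficients in ⟨x+r⟩_{n,λ} = Σ_{k=0}^n L_λʳ(n,k)(x)_{k,λ},
then for n ≥ k we have L_λʳ(n,k) = (n!/k!)·C_λ(r+λ(n-1), n-k). -/
theorem degRLah_explicit (l : ℝ) (hl : l ≠ 0) (L : ℕ → ℕ → ℝ) (r n k : ℕ) (hkn : k ≤ n)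
    (hL : ∀ (m : ℕ) (x : ℝ),
      degRising l (x + r) m = ∑ j ∈ Finset.range (m + 1), L m j * degFalling l x j) :
    L n k = (n.factorial : ℝ) / (k.factorial : ℝ) *
      degChoose l ((r : ℝ) + l * ((n : ℝ) - 1)) (n - k) := by
  have hz : ∀ x, ∑ j ∈ Finset.range (n+1), (L n j - Bc l r n j) * degFalling l x j = 0 := by
    intro x
    simp only [sub_mul, Finset.sum_sub_distrib]
    rw [← hL n x, ← expand_aux l r n x]
    ring
  have hBL := unique_coeff l hl n _ hz k hkn
  have : L n k = Bc l r n k := by linarith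
  rw [this]
  exact Bc_eq l r n k hkn
end
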